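/- Let (X,d) be a nonempty complete proper metric space and f_1, …, f_N : X → X contractions. Then there exists a nonempty compact subset B ⊆ X with F(B) ⊆ B, where F(S) = f_1(S) ∪ ⋯ ∪ f_N(S). -/
import Mathlib

theorem stmt_7 {X : Type*} [MetricSpace X] [Nonempty X] [CompleteSpace X]
    [ProperSpace X] {N : ℕ} (hN : 0 < N)
    (f : Fin N → X → X) (lam : Fin N → ℝ)
    (hlam : ∀ i, lam i ∈ Set.Ioo (0 : ℝ) 1)
    (hf : ∀ i x y, dist (f i x) (f i y) ≤ lam i * dist x y) :
    ∃ B : Set X, B.Nonempty ∧ IsCompact B ∧ (⋃ i, f i '' B) ⊆ B := by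
  obtain ⟨x0⟩ := ‹Nonempty X›
  have hNne : (Finset.univ : Finset (Fin N)).Nonempty :=
    @Finset.univ_nonempty _ _ (Fin.pos_iff_nonempty.mp hN)
  set L := Finset.univ.sup' hNne lam with hLdef
  set C := Finset.univ.sup' hNne (fun i => dist (f i x0) x0) with hCdef
  have i0 : Fin N := ⟨0, hN⟩
  have hL1 : L < 1 := (Finset.sup'_lt_iff hNne).mpr fun i _ => (hlam i).2
  have hL0 : 0 < L := lt_of_lt_of_le (hlam i0).1 (Finset.le_sup' lam (Finset.mem_univ i0))
  have hC0 : 0 ≤ C := le_trans dist_nonneg (Finset.le_sup' (fun i => dist (f i x0) x0) (Finset.mem_univ i0))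
  set R := C / (1 - L) with hRdef
  have hR0 : 0 ≤ R := div_nonneg hC0 (by linarith)
  refine ⟨Metric.closedBall x0 R, ⟨x0, Metric.mem_closedBall_self hR0⟩,
    isCompact_closedBall _ _, ?_⟩
  rintro y hy
  simp only [Set.mem_iUnion, Set.mem_image] at hy
  obtain ⟨i, x, hx, rfl⟩ := hy
  have hx' : dist x x0 ≤ R := hx
  have h1 : dist (f i x) x0 ≤ lam i * dist x x0 + dist (f i x0) x0 :=
    (dist_triangle _ (f i x0) _).trans (by gcongr; exact hf i x x0)
  have h2 : lam i * dist x x0 ≤ L * R :=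
    mul_le_mul (Finset.le_sup' lam (Finset.mem_univ i)) hx' dist_nonneg hL0.le
  have h3 : dist (f i x0) x0 ≤ C := Finset.le_sup' (fun i => dist (f i x0) x0) (Finset.mem_univ i)
  have hkey : L * R + C = R := by
    have h : (1:ℝ) - L ≠ 0 := by linarith
    rw [hRdef]; field_simp; ring
  have : dist (f i x) x0 ≤ R := by
    calc dist (f i x) x0 ≤ lam i * dist x x0 + dist (f i x0) x0 := h1
      _ ≤ L * R + C := add_le_add h2 h3
      _ = R := hkey
  exact this
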